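/- (Marginals, Case 2.) Suppose θ₁+θ₂ = θ₁′ and θ₁+θ₂ ≠ θ₂′. Then for every y₁ ∈ (a,b), the marginal CDF F_{Y₁}(y₁) = ∫_a^{y₁} ∫_a^b f(u,v) dv du equals F₀(y₁)^{θ₁+θ₂}·[1 − θ₂ ln(F₀(y₁))], and for every y₂ ∈ (a,b), the marginal CDF F_{Y₂}(y₂) = ∫_a^b ∫_a^{y₂} f(u,v) dv du equals (θ₁/(θ₁+θ₂−θ₂′))·F₀(y₂)^{θ₂′} + ((θ₂−θ₂′)/(θ₁+θ₂−θ₂′))·F₀(y₂)^{θ₁+θ₂}. -/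

import Mathlib

open MeasureTheory Set

section FtcOpenHelper
open Filter Topology


lemma ftc_open {a b ga gb : ℝ} (hab : a < b) {f g g' : ℝ → ℝ}
    (hfg : ∀ x ∈ Ioo a b, f x = g' x)
    (hderiv : ∀ x ∈ Ioo a b, HasDerivAt g (g' x) x)
    (hpos : ∀ x ∈ Ioo a b, 0 ≤ g' x)
    (ha : Filter.Tendsto g (nhdsWithin a (Ioi a)) (nhds ga))
    (hb : Filter.Tendsto g (nhdsWithin b (Iio b)) (nhds gb)) :
    IntervalIntegrable f MeasureTheory.volume a b ∧ (∫ x in a..b, f x) = gb - ga := by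
  set G : ℝ → ℝ := fun x => if x ≤ a then ga else if b ≤ x then gb else g x with hG
  have hGeq : ∀ x ∈ Ioo a b, G x = g x := by
    intro x hx
    simp [hG, not_le.2 hx.1, not_le.2 hx.2]
  have hGa : G a = ga := by simp [hG]
  have hGb : G b = gb := by simp [hG, not_le.2 hab]
  have hGcont : ContinuousOn G (Icc a b) := by
    intro x hx
    rcases lt_or_eq_of_le hx.1 with hax | hax
    swap
    · -- continuity at a
      subst hax
      have h1 : Tendsto G (nhdsWithin a (Ioi a)) (nhds ga) := by
        apply ha.congr'
        filter_upwards [self_mem_nhdsWithin, eventually_nhdsWithin_of_eventually_nhds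
          (eventually_lt_nhds hab)] with y hy hyb
        simp [hG, not_le.2 (mem_Ioi.1 hy), not_le.2 hyb]
      have h2 : Tendsto G (nhdsWithin a {a}) (nhds ga) := by
        refine tendsto_const_nhds.congr' ?_
        filter_upwards [self_mem_nhdsWithin] with y hy
        rw [mem_singleton_iff.1 hy, hGa]
      have hle : nhdsWithin a (Icc a b) ≤ nhdsWithin a ({a} ∪ Ioi a) := by
        apply nhdsWithin_mono
        intro y hy
        rcases eq_or_lt_of_le hy.1 with h | h
        · exact Or.inl h.symm
        · exact Or.inr h
      have : Tendsto G (nhdsWithin a (Icc a b)) (nhds ga) := by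
        refine Tendsto.mono_left ?_ hle
        rw [nhdsWithin_union]
        exact Tendsto.sup h2 h1
      simpa [ContinuousWithinAt, hGa] using this
    rcases lt_or_eq_of_le hx.2 with hxb | hxb
    · -- interior
      have hx' : x ∈ Ioo a b := ⟨hax, hxb⟩
      have hev : G =ᶠ[nhds x] g := by
        filter_upwards [Ioo_mem_nhds hax hxb] with y hy
        exact hGeq y hy
      exact (((hderiv x hx').continuousAt).congr hev.symm).continuousWithinAt
    · -- continuity at b
      subst hxb
      have h1 : Tendsto G (nhdsWithin x (Iio x)) (nhds gb) := by
        apply hb.congr'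
        filter_upwards [self_mem_nhdsWithin, eventually_nhdsWithin_of_eventually_nhds
          (eventually_gt_nhds hab)] with y hy hya
        simp [hG, not_le.2 hya, not_le.2 (mem_Iio.1 hy)]
      have h2 : Tendsto G (nhdsWithin x {x}) (nhds gb) := by
        refine tendsto_const_nhds.congr' ?_
        filter_upwards [self_mem_nhdsWithin] with y hy
        rw [mem_singleton_iff.1 hy, hGb]
      have hle : nhdsWithin x (Icc a x) ≤ nhdsWithin x (Iio x ∪ {x}) := by
        apply nhdsWithin_mono
        intro y hy
        rcases eq_or_lt_of_le hy.2 with h | h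
        · exact Or.inr h
        · exact Or.inl h
      have : Tendsto G (nhdsWithin x (Icc a x)) (nhds gb) := by
        refine Tendsto.mono_left ?_ hle
        rw [nhdsWithin_union]
        exact Tendsto.sup h1 h2
      simpa [ContinuousWithinAt, hGb] using this
  have hGderiv : ∀ x ∈ Ioo a b, HasDerivAt G (g' x) x := by
    intro x hx
    apply (hderiv x hx).congr_of_eventuallyEq
    filter_upwards [Ioo_mem_nhds hx.1 hx.2] with y hy
    exact hGeq y hy
  have hint : IntegrableOn g' (Ioc a b) MeasureTheory.volume :=
    intervalIntegral.integrableOn_deriv_of_nonneg hGcont hGderiv hpos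
  have hintoo : IntegrableOn g' (Ioo a b) MeasureTheory.volume :=
    (integrableOn_Ioc_iff_integrableOn_Ioo).mp hint
  have hfint : IntervalIntegrable f MeasureTheory.volume a b := by
    rw [intervalIntegrable_iff_integrableOn_Ioo_of_le hab.le]
    exact hintoo.congr_fun (fun x hx => (hfg x hx).symm) measurableSet_Ioo
  refine ⟨hfint, ?_⟩
  have hg'int : IntervalIntegrable g' MeasureTheory.volume a b := by
    rw [intervalIntegrable_iff_integrableOn_Ioo_of_le hab.le]; exact hintoo
  have hval : (∫ x in a..b, g' x) = G b - G a :=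
    intervalIntegral.integral_eq_sub_of_hasDeriv_right_of_le hab.le hGcont
      (fun x hx => (hGderiv x hx).hasDerivWithinAt) hg'int
  have hcongr : (∫ x in a..b, f x) = ∫ x in a..b, g' x := by
    rw [intervalIntegral.integral_of_le hab.le, intervalIntegral.integral_of_le hab.le,
      MeasureTheory.integral_Ioc_eq_integral_Ioo, MeasureTheory.integral_Ioc_eq_integral_Ioo]
    exact MeasureTheory.setIntegral_congr_fun measurableSet_Ioo hfg
  rw [hcongr, hval, hGa, hGb]

end FtcOpenHelper

noncomputable def dprh (a b : ℝ) (F₀ f₀ : ℝ → ℝ) (θ₁ θ₂ θ₁' θ₂' : ℝ) (y₁ y₂ : ℝ) : ℝ :=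
  if a < y₁ ∧ y₁ < y₂ ∧ y₂ < b then
    θ₁' * θ₂ * f₀ y₁ * f₀ y₂ * F₀ y₁ ^ (θ₁' - 1) * F₀ y₂ ^ (θ₁ + θ₂ - θ₁' - 1)
  else if a < y₂ ∧ y₂ < y₁ ∧ y₁ < b then
    θ₁ * θ₂' * f₀ y₁ * f₀ y₂ * F₀ y₁ ^ (θ₁ + θ₂ - θ₂' - 1) * F₀ y₂ ^ (θ₂' - 1)
  else 0

theorem dprh_marginals_case2
    (a b : ℝ) (hab : a < b) (F₀ f₀ : ℝ → ℝ)
    (hderiv : ∀ y ∈ Ioo a b, HasDerivAt F₀ (f₀ y) y)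
    (hf₀cont : ContinuousOn f₀ (Ioo a b))
    (hmono : StrictMonoOn F₀ (Ioo a b))
    (hf₀pos : ∀ y ∈ Ioo a b, 0 < f₀ y)
    (hF₀pos : ∀ y ∈ Ioo a b, 0 < F₀ y)
    (hF₀lt1 : ∀ y ∈ Ioo a b, F₀ y < 1)
    (hFa : Filter.Tendsto F₀ (nhdsWithin a (Ioi a)) (nhds 0))
    (hFb : Filter.Tendsto F₀ (nhdsWithin b (Iio b)) (nhds 1))
    (θ₁ θ₂ θ₁' θ₂' : ℝ) (hθ₁ : 0 < θ₁) (hθ₂ : 0 < θ₂) (hθ₁' : 0 < θ₁') (hθ₂' : 0 < θ₂')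
    (heq₁ : θ₁ + θ₂ = θ₁') (hne₂ : θ₁ + θ₂ ≠ θ₂')
    :
    (∀ y₁ ∈ Ioo a b,
      (∫ u in a..y₁, ∫ v in a..b, dprh a b F₀ f₀ θ₁ θ₂ θ₁' θ₂' u v) =
        F₀ y₁ ^ (θ₁ + θ₂) * (1 - θ₂ * Real.log (F₀ y₁))) ∧
    (∀ y₂ ∈ Ioo a b,
      (∫ u in a..b, ∫ v in a..y₂, dprh a b F₀ f₀ θ₁ θ₂ θ₁' θ₂' u v) =
        θ₁ / (θ₁ + θ₂ - θ₂') * F₀ y₂ ^ θ₂' +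
          (θ₂ - θ₂') / (θ₁ + θ₂ - θ₂') * F₀ y₂ ^ (θ₁ + θ₂)) := by
  subst heq₁
  have hθ : (0:ℝ) < θ₁ + θ₂ := hθ₁'
  have hd : θ₁ + θ₂ - θ₂' ≠ 0 := sub_ne_zero.2 hne₂
  have hFne : ∀ x ∈ Ioo a b, F₀ x ≠ 0 := fun x hx => ne_of_gt (hF₀pos x hx)
  have hR : ∀ (p : ℝ), ∀ x ∈ Ioo a b,
      HasDerivAt (fun y => F₀ y ^ p) (f₀ x * p * F₀ x ^ (p-1)) x :=
    fun p x hx => (hderiv x hx).rpow_const (Or.inl (hFne x hx))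
  have hL : ∀ x ∈ Ioo a b, HasDerivAt (fun y => Real.log (F₀ y)) (f₀ x / F₀ x) x :=
    fun x hx => (hderiv x hx).log (hFne x hx)
  have hFa' : Filter.Tendsto F₀ (nhdsWithin a (Ioi a)) (nhdsWithin 0 (Ioi 0)) := by
    rw [tendsto_nhdsWithin_iff]
    refine ⟨hFa, ?_⟩
    filter_upwards [Ioo_mem_nhdsGT_of_mem (left_mem_Ico.2 hab)] with y hy
    exact hF₀pos y hy
  have hRa : ∀ (p:ℝ), 0 < p →
      Filter.Tendsto (fun y => F₀ y ^ p) (nhdsWithin a (Ioi a)) (nhds 0) := by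
    intro p hp
    have := (Real.continuousAt_rpow_const 0 p (Or.inr hp.le)).tendsto.comp hFa
    simpa [Function.comp_def, Real.zero_rpow hp.ne'] using this
  have hRb : ∀ (p:ℝ), Filter.Tendsto (fun y => F₀ y ^ p) (nhdsWithin b (Iio b)) (nhds 1) := by
    intro p
    have := (Real.continuousAt_rpow_const 1 p (Or.inl one_ne_zero)).tendsto.comp hFb
    simpa [Function.comp_def] using this
  have hLb : Filter.Tendsto (fun y => Real.log (F₀ y)) (nhdsWithin b (Iio b)) (nhds 0) := by
    have := (Real.continuousAt_log one_ne_zero).tendsto.comp hFb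
    simpa [Function.comp_def] using this
  have hLRa : ∀ (p:ℝ), 0 < p →
      Filter.Tendsto (fun y => Real.log (F₀ y) * F₀ y ^ p) (nhdsWithin a (Ioi a)) (nhds 0) := by
    intro p hp
    exact (tendsto_log_mul_rpow_nhdsGT_zero hp).comp hFa'
  have hmulR : ∀ x ∈ Ioo a b, ∀ p q : ℝ, F₀ x ^ p * F₀ x ^ q = F₀ x ^ (p+q) :=
    fun x hx p q => (Real.rpow_add (hF₀pos x hx) p q).symm
  have hnn : ∀ x ∈ Ioo a b, ∀ p:ℝ, 0 ≤ F₀ x ^ p :=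
    fun x hx p => (Real.rpow_pos_of_pos (hF₀pos x hx) p).le
  have hlognp : ∀ x ∈ Ioo a b, Real.log (F₀ x) ≤ 0 :=
    fun x hx => Real.log_nonpos (hF₀pos x hx).le (hF₀lt1 x hx).le
  -- branch values
  have hD1 : ∀ u v, a < u → u < v → v < b →
      dprh a b F₀ f₀ θ₁ θ₂ (θ₁+θ₂) θ₂' u v =
        (θ₁+θ₂) * θ₂ * f₀ u * f₀ v * F₀ u ^ (θ₁+θ₂-1) * (F₀ v)⁻¹ := by
    intro u v h1 h2 h3
    simp only [dprh]
    rw [if_pos (⟨h1, h2, h3⟩ : a < u ∧ u < v ∧ v < b),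
      show θ₁+θ₂-(θ₁+θ₂)-1 = (-1:ℝ) by ring, Real.rpow_neg_one]
  have hD2 : ∀ u v, a < v → v < u → u < b →
      dprh a b F₀ f₀ θ₁ θ₂ (θ₁+θ₂) θ₂' u v =
        θ₁ * θ₂' * f₀ u * f₀ v * F₀ u ^ (θ₁+θ₂-θ₂'-1) * F₀ v ^ (θ₂'-1) := by
    intro u v h1 h2 h3
    simp only [dprh]
    rw [if_neg (fun h => absurd (h.2.1.trans h2) (lt_irrefl u)),
      if_pos (⟨h1, h2, h3⟩ : a < v ∧ v < u ∧ u < b)]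
  -- inner integrals
  have innerL : ∀ u ∈ Ioo a b, ∀ c, a < c → c ≤ u →
      IntervalIntegrable (fun v => dprh a b F₀ f₀ θ₁ θ₂ (θ₁+θ₂) θ₂' u v)
        MeasureTheory.volume a c ∧
      (∫ v in a..c, dprh a b F₀ f₀ θ₁ θ₂ (θ₁+θ₂) θ₂' u v) =
        θ₁ * f₀ u * F₀ u ^ (θ₁+θ₂-θ₂'-1) * F₀ c ^ θ₂' := by
    intro u hu c hac hcu
    have hcb : c < b := lt_of_le_of_lt hcu hu.2
    have hc : c ∈ Ioo a b := ⟨hac, hcb⟩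
    have key := ftc_open (f := fun v => dprh a b F₀ f₀ θ₁ θ₂ (θ₁+θ₂) θ₂' u v)
      (g := fun v => θ₁ * f₀ u * F₀ u ^ (θ₁+θ₂-θ₂'-1) * F₀ v ^ θ₂')
      (g' := fun v => θ₁ * f₀ u * F₀ u ^ (θ₁+θ₂-θ₂'-1) * (f₀ v * θ₂' * F₀ v ^ (θ₂'-1)))
      (ga := 0) (gb := θ₁ * f₀ u * F₀ u ^ (θ₁+θ₂-θ₂'-1) * F₀ c ^ θ₂')
      hac ?_ ?_ ?_ ?_ ?_
    · exact ⟨key.1, by simpa using key.2⟩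
    · intro v hv
      have hv' : v ∈ Ioo a b := ⟨hv.1, hv.2.trans hcb⟩
      show dprh a b F₀ f₀ θ₁ θ₂ (θ₁+θ₂) θ₂' u v = _
      rw [hD2 u v hv.1 (lt_of_lt_of_le hv.2 hcu) hu.2]
      ring
    · intro v hv
      have hv' : v ∈ Ioo a b := ⟨hv.1, hv.2.trans hcb⟩
      exact ((hR θ₂' v hv').const_mul _)
    · intro v hv
      have hv' : v ∈ Ioo a b := ⟨hv.1, hv.2.trans hcb⟩
      exact mul_nonneg (mul_nonneg (mul_nonneg hθ₁.le (hf₀pos u hu).le) (hnn u hu _))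
        (mul_nonneg (mul_nonneg (hf₀pos v hv').le hθ₂'.le) (hnn v hv' _))
    · simpa using tendsto_const_nhds.mul (hRa θ₂' hθ₂')
    · exact ((hR θ₂' c hc).const_mul
        (θ₁ * f₀ u * F₀ u ^ (θ₁+θ₂-θ₂'-1))).continuousAt.tendsto.mono_left nhdsWithin_le_nhds
  have innerR : ∀ u ∈ Ioo a b,
      IntervalIntegrable (fun v => dprh a b F₀ f₀ θ₁ θ₂ (θ₁+θ₂) θ₂' u v)
        MeasureTheory.volume u b ∧
      (∫ v in u..b, dprh a b F₀ f₀ θ₁ θ₂ (θ₁+θ₂) θ₂' u v) =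
        0 - (θ₁+θ₂) * θ₂ * f₀ u * F₀ u ^ (θ₁+θ₂-1) * Real.log (F₀ u) := by
    intro u hu
    have key := ftc_open (f := fun v => dprh a b F₀ f₀ θ₁ θ₂ (θ₁+θ₂) θ₂' u v)
      (g := fun v => (θ₁+θ₂) * θ₂ * f₀ u * F₀ u ^ (θ₁+θ₂-1) * Real.log (F₀ v))
      (g' := fun v => (θ₁+θ₂) * θ₂ * f₀ u * F₀ u ^ (θ₁+θ₂-1) * (f₀ v / F₀ v))
      (ga := (θ₁+θ₂) * θ₂ * f₀ u * F₀ u ^ (θ₁+θ₂-1) * Real.log (F₀ u)) (gb := 0)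
      hu.2 ?_ ?_ ?_ ?_ ?_
    · exact ⟨key.1, by simpa using key.2⟩
    · intro v hv
      have hv' : v ∈ Ioo a b := ⟨hu.1.trans hv.1, hv.2⟩
      show dprh a b F₀ f₀ θ₁ θ₂ (θ₁+θ₂) θ₂' u v = _
      rw [hD1 u v hu.1 hv.1 hv.2]
      ring
    · intro v hv
      have hv' : v ∈ Ioo a b := ⟨hu.1.trans hv.1, hv.2⟩
      exact (hL v hv').const_mul _
    · intro v hv
      have hv' : v ∈ Ioo a b := ⟨hu.1.trans hv.1, hv.2⟩
      exact mul_nonneg (mul_nonneg (mul_nonneg (mul_nonneg hθ.le hθ₂.le) (hf₀pos u hu).le)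
        (hnn u hu _)) (div_nonneg (hf₀pos v hv').le (hF₀pos v hv').le)
    · exact ((hL u hu).const_mul
        ((θ₁+θ₂) * θ₂ * f₀ u * F₀ u ^ (θ₁+θ₂-1))).continuousAt.tendsto.mono_left
        nhdsWithin_le_nhds
    · simpa using tendsto_const_nhds.mul hLb
  have innerMid : ∀ u ∈ Ioo a b, ∀ c, u < c → c < b →
      IntervalIntegrable (fun v => dprh a b F₀ f₀ θ₁ θ₂ (θ₁+θ₂) θ₂' u v)
        MeasureTheory.volume u c ∧
      (∫ v in u..c, dprh a b F₀ f₀ θ₁ θ₂ (θ₁+θ₂) θ₂' u v) =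
        (θ₁+θ₂) * θ₂ * f₀ u * F₀ u ^ (θ₁+θ₂-1) * Real.log (F₀ c) -
          (θ₁+θ₂) * θ₂ * f₀ u * F₀ u ^ (θ₁+θ₂-1) * Real.log (F₀ u) := by
    intro u hu c huc hcb
    have hc : c ∈ Ioo a b := ⟨hu.1.trans huc, hcb⟩
    have key := ftc_open (f := fun v => dprh a b F₀ f₀ θ₁ θ₂ (θ₁+θ₂) θ₂' u v)
      (g := fun v => (θ₁+θ₂) * θ₂ * f₀ u * F₀ u ^ (θ₁+θ₂-1) * Real.log (F₀ v))
      (g' := fun v => (θ₁+θ₂) * θ₂ * f₀ u * F₀ u ^ (θ₁+θ₂-1) * (f₀ v / F₀ v))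
      (ga := (θ₁+θ₂) * θ₂ * f₀ u * F₀ u ^ (θ₁+θ₂-1) * Real.log (F₀ u))
      (gb := (θ₁+θ₂) * θ₂ * f₀ u * F₀ u ^ (θ₁+θ₂-1) * Real.log (F₀ c))
      huc ?_ ?_ ?_ ?_ ?_
    · exact ⟨key.1, key.2⟩
    · intro v hv
      have hv' : v ∈ Ioo a b := ⟨hu.1.trans hv.1, hv.2.trans hcb⟩
      show dprh a b F₀ f₀ θ₁ θ₂ (θ₁+θ₂) θ₂' u v = _
      rw [hD1 u v hu.1 hv.1 hv'.2]
      ring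
    · intro v hv
      have hv' : v ∈ Ioo a b := ⟨hu.1.trans hv.1, hv.2.trans hcb⟩
      exact (hL v hv').const_mul _
    · intro v hv
      have hv' : v ∈ Ioo a b := ⟨hu.1.trans hv.1, hv.2.trans hcb⟩
      exact mul_nonneg (mul_nonneg (mul_nonneg (mul_nonneg hθ.le hθ₂.le) (hf₀pos u hu).le)
        (hnn u hu _)) (div_nonneg (hf₀pos v hv').le (hF₀pos v hv').le)
    · exact ((hL u hu).const_mul
        ((θ₁+θ₂) * θ₂ * f₀ u * F₀ u ^ (θ₁+θ₂-1))).continuousAt.tendsto.mono_left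
        nhdsWithin_le_nhds
    · exact ((hL c hc).const_mul
        ((θ₁+θ₂) * θ₂ * f₀ u * F₀ u ^ (θ₁+θ₂-1))).continuousAt.tendsto.mono_left
        nhdsWithin_le_nhds
  have inner1 : ∀ u ∈ Ioo a b,
      (∫ v in a..b, dprh a b F₀ f₀ θ₁ θ₂ (θ₁+θ₂) θ₂' u v) =
        θ₁ * f₀ u * F₀ u ^ (θ₁+θ₂-1) -
          (θ₁+θ₂) * θ₂ * f₀ u * F₀ u ^ (θ₁+θ₂-1) * Real.log (F₀ u) := by
    intro u hu
    obtain ⟨i1, v1⟩ := innerL u hu u hu.1 le_rfl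
    obtain ⟨i2, v2⟩ := innerR u hu
    have heq : F₀ u ^ (θ₁+θ₂-θ₂'-1) * F₀ u ^ θ₂' = F₀ u ^ (θ₁+θ₂-1) := by
      rw [hmulR u hu]; congr 1; ring
    rw [← intervalIntegral.integral_add_adjacent_intervals i1 i2, v1, v2]
    linear_combination (θ₁ * f₀ u) * heq
  have houter1 : ∀ y₁ ∈ Ioo a b,
      (∫ u in a..y₁, ∫ v in a..b, dprh a b F₀ f₀ θ₁ θ₂ (θ₁+θ₂) θ₂' u v) =
        F₀ y₁ ^ (θ₁ + θ₂) * (1 - θ₂ * Real.log (F₀ y₁)) ∧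
      IntervalIntegrable (fun u => ∫ v in a..b, dprh a b F₀ f₀ θ₁ θ₂ (θ₁+θ₂) θ₂' u v)
        MeasureTheory.volume a y₁ := by
    intro y₁ hy₁
    have hGd : ∀ x ∈ Ioo a b,
        HasDerivAt (fun u => F₀ u ^ (θ₁+θ₂) * (1 - θ₂ * Real.log (F₀ u)))
          (θ₁ * f₀ x * F₀ x ^ (θ₁+θ₂-1) -
            (θ₁+θ₂) * θ₂ * f₀ x * F₀ x ^ (θ₁+θ₂-1) * Real.log (F₀ x)) x := by
      intro x hx
      have h := (hR (θ₁+θ₂) x hx).mul (((hL x hx).const_mul θ₂).const_sub 1)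
      refine h.congr_deriv ?_
      symm
      have heq : F₀ x ^ (θ₁+θ₂-1) * F₀ x = F₀ x ^ (θ₁+θ₂) := by
        nth_rewrite 2 [← Real.rpow_one (F₀ x)]
        rw [hmulR x hx]; congr 1; ring
      have hdiv : F₀ x ^ (θ₁+θ₂) * (f₀ x / F₀ x) = f₀ x * F₀ x ^ (θ₁+θ₂-1) := by
        rw [show θ₁+θ₂-1 = θ₁+θ₂ - 1 from rfl, Real.rpow_sub (hF₀pos x hx), Real.rpow_one]
        ring
      linear_combination θ₂ * hdiv
    have key := ftc_open (f := fun u => ∫ v in a..b, dprh a b F₀ f₀ θ₁ θ₂ (θ₁+θ₂) θ₂' u v)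
      (g := fun u => F₀ u ^ (θ₁+θ₂) * (1 - θ₂ * Real.log (F₀ u)))
      (g' := fun x => θ₁ * f₀ x * F₀ x ^ (θ₁+θ₂-1) -
            (θ₁+θ₂) * θ₂ * f₀ x * F₀ x ^ (θ₁+θ₂-1) * Real.log (F₀ x))
      (ga := 0) (gb := F₀ y₁ ^ (θ₁+θ₂) * (1 - θ₂ * Real.log (F₀ y₁)))
      hy₁.1 ?_ ?_ ?_ ?_ ?_
    · exact ⟨by simpa using key.2, key.1⟩
    · intro u hu
      exact inner1 u ⟨hu.1, hu.2.trans hy₁.2⟩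
    · intro x hx
      exact hGd x ⟨hx.1, hx.2.trans hy₁.2⟩
    · intro x hx
      have hx' : x ∈ Ioo a b := ⟨hx.1, hx.2.trans hy₁.2⟩
      have hA : 0 ≤ θ₁ * f₀ x * F₀ x ^ (θ₁+θ₂-1) :=
        mul_nonneg (mul_nonneg hθ₁.le (hf₀pos x hx').le) (hnn x hx' _)
      have hB : 0 ≤ (θ₁+θ₂) * θ₂ * f₀ x * F₀ x ^ (θ₁+θ₂-1) :=
        mul_nonneg (mul_nonneg (mul_nonneg hθ.le hθ₂.le) (hf₀pos x hx').le) (hnn x hx' _)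
      have hC := mul_nonpos_of_nonneg_of_nonpos hB (hlognp x hx')
      show (0:ℝ) ≤ θ₁ * f₀ x * F₀ x ^ (θ₁+θ₂-1) -
          (θ₁+θ₂) * θ₂ * f₀ x * F₀ x ^ (θ₁+θ₂-1) * Real.log (F₀ x)
      linarith
    · have h1 := (hRa (θ₁+θ₂) hθ).sub (tendsto_const_nhds.mul (hLRa (θ₁+θ₂) hθ) :
        Filter.Tendsto (fun y => θ₂ * (Real.log (F₀ y) * F₀ y ^ (θ₁+θ₂)))
          (nhdsWithin a (Ioi a)) (nhds (θ₂ * 0)))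
      have h2 : Filter.Tendsto
          (fun y => F₀ y ^ (θ₁+θ₂) - θ₂ * (Real.log (F₀ y) * F₀ y ^ (θ₁+θ₂)))
          (nhdsWithin a (Ioi a)) (nhds 0) := by simpa using h1
      exact h2.congr (fun y => by ring)
    · exact (hGd y₁ hy₁).continuousAt.tendsto.mono_left nhdsWithin_le_nhds
  refine ⟨fun y₁ hy₁ => (houter1 y₁ hy₁).1, ?_⟩
  intro y₂ hy₂
  have J2 : ∀ u ∈ Ioo a y₂,
      (∫ v in a..y₂, dprh a b F₀ f₀ θ₁ θ₂ (θ₁+θ₂) θ₂' u v) =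
        θ₁ * f₀ u * F₀ u ^ (θ₁+θ₂-1) + (θ₁+θ₂) * θ₂ * f₀ u * F₀ u ^ (θ₁+θ₂-1) *
          (Real.log (F₀ y₂) - Real.log (F₀ u)) := by
    intro u hu
    have hu' : u ∈ Ioo a b := ⟨hu.1, hu.2.trans hy₂.2⟩
    obtain ⟨i1, v1⟩ := innerL u hu' u hu.1 le_rfl
    obtain ⟨i2, v2⟩ := innerMid u hu' y₂ hu.2 hy₂.2
    have heq : F₀ u ^ (θ₁+θ₂-θ₂'-1) * F₀ u ^ θ₂' = F₀ u ^ (θ₁+θ₂-1) := by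
      rw [hmulR u hu']; congr 1; ring
    rw [← intervalIntegral.integral_add_adjacent_intervals i1 i2, v1, v2]
    linear_combination (θ₁ * f₀ u) * heq
  have hGd2 : ∀ x ∈ Ioo a b,
      HasDerivAt (fun u => F₀ u ^ (θ₁+θ₂) * (1 - θ₂ * Real.log (F₀ u)) +
          θ₂ * Real.log (F₀ y₂) * F₀ u ^ (θ₁+θ₂))
        (θ₁ * f₀ x * F₀ x ^ (θ₁+θ₂-1) + (θ₁+θ₂) * θ₂ * f₀ x * F₀ x ^ (θ₁+θ₂-1) *
          (Real.log (F₀ y₂) - Real.log (F₀ x))) x := by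
    intro x hx
    have h := ((hR (θ₁+θ₂) x hx).mul (((hL x hx).const_mul θ₂).const_sub 1)).add
      ((hR (θ₁+θ₂) x hx).const_mul (θ₂ * Real.log (F₀ y₂)))
    refine h.congr_deriv ?_
    symm
    have hdiv : F₀ x ^ (θ₁+θ₂) * (f₀ x / F₀ x) = f₀ x * F₀ x ^ (θ₁+θ₂-1) := by
      rw [show θ₁+θ₂-1 = θ₁+θ₂ - 1 from rfl, Real.rpow_sub (hF₀pos x hx), Real.rpow_one]
      ring
    linear_combination θ₂ * hdiv
  have pieceA := ftc_open
    (f := fun u => ∫ v in a..y₂, dprh a b F₀ f₀ θ₁ θ₂ (θ₁+θ₂) θ₂' u v)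
    (g := fun u => F₀ u ^ (θ₁+θ₂) * (1 - θ₂ * Real.log (F₀ u)) +
        θ₂ * Real.log (F₀ y₂) * F₀ u ^ (θ₁+θ₂))
    (g' := fun x => θ₁ * f₀ x * F₀ x ^ (θ₁+θ₂-1) + (θ₁+θ₂) * θ₂ * f₀ x * F₀ x ^ (θ₁+θ₂-1) *
        (Real.log (F₀ y₂) - Real.log (F₀ x)))
    (ga := 0)
    (gb := F₀ y₂ ^ (θ₁+θ₂) * (1 - θ₂ * Real.log (F₀ y₂)) +
        θ₂ * Real.log (F₀ y₂) * F₀ y₂ ^ (θ₁+θ₂))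
    hy₂.1 ?hfgA ?hdA ?hpA ?haA ?hbA
  case hfgA => exact fun u hu => J2 u hu
  case hdA => exact fun x hx => hGd2 x ⟨hx.1, hx.2.trans hy₂.2⟩
  case hpA =>
    intro x hx
    have hx' : x ∈ Ioo a b := ⟨hx.1, hx.2.trans hy₂.2⟩
    have hA : 0 ≤ θ₁ * f₀ x * F₀ x ^ (θ₁+θ₂-1) :=
      mul_nonneg (mul_nonneg hθ₁.le (hf₀pos x hx').le) (hnn x hx' _)
    have hB : 0 ≤ (θ₁+θ₂) * θ₂ * f₀ x * F₀ x ^ (θ₁+θ₂-1) :=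
      mul_nonneg (mul_nonneg (mul_nonneg hθ.le hθ₂.le) (hf₀pos x hx').le) (hnn x hx' _)
    have hlog : Real.log (F₀ x) ≤ Real.log (F₀ y₂) :=
      Real.log_le_log (hF₀pos x hx') (hmono hx' hy₂ hx.2).le
    have := mul_nonneg hB (sub_nonneg.2 hlog)
    show (0:ℝ) ≤ θ₁ * f₀ x * F₀ x ^ (θ₁+θ₂-1) + (θ₁+θ₂) * θ₂ * f₀ x * F₀ x ^ (θ₁+θ₂-1) *
        (Real.log (F₀ y₂) - Real.log (F₀ x))
    linarith
  case haA =>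
    have h1 := ((hRa (θ₁+θ₂) hθ).sub (tendsto_const_nhds.mul (hLRa (θ₁+θ₂) hθ) :
        Filter.Tendsto (fun y => θ₂ * (Real.log (F₀ y) * F₀ y ^ (θ₁+θ₂)))
          (nhdsWithin a (Ioi a)) (nhds (θ₂ * 0)))).add
      (tendsto_const_nhds.mul (hRa (θ₁+θ₂) hθ) :
        Filter.Tendsto (fun y => θ₂ * Real.log (F₀ y₂) * F₀ y ^ (θ₁+θ₂))
          (nhdsWithin a (Ioi a)) (nhds (θ₂ * Real.log (F₀ y₂) * 0)))
    have h2 : Filter.Tendsto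
        (fun y => F₀ y ^ (θ₁+θ₂) - θ₂ * (Real.log (F₀ y) * F₀ y ^ (θ₁+θ₂)) +
          θ₂ * Real.log (F₀ y₂) * F₀ y ^ (θ₁+θ₂))
        (nhdsWithin a (Ioi a)) (nhds 0) := by simpa using h1
    exact h2.congr (fun y => by ring)
  case hbA => exact (hGd2 y₂ hy₂).continuousAt.tendsto.mono_left nhdsWithin_le_nhds
  have pieceB := ftc_open
    (f := fun u => ∫ v in a..y₂, dprh a b F₀ f₀ θ₁ θ₂ (θ₁+θ₂) θ₂' u v)
    (g := fun u => θ₁ * F₀ y₂ ^ θ₂' / (θ₁+θ₂-θ₂') * F₀ u ^ (θ₁+θ₂-θ₂'))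
    (g' := fun x => θ₁ * f₀ x * F₀ x ^ (θ₁+θ₂-θ₂'-1) * F₀ y₂ ^ θ₂')
    (ga := θ₁ * F₀ y₂ ^ θ₂' / (θ₁+θ₂-θ₂') * F₀ y₂ ^ (θ₁+θ₂-θ₂'))
    (gb := θ₁ * F₀ y₂ ^ θ₂' / (θ₁+θ₂-θ₂'))
    hy₂.2 ?hfgB ?hdB ?hpB ?haB ?hbB
  case hfgB =>
    intro u hu
    exact (innerL u ⟨hy₂.1.trans hu.1, hu.2⟩ y₂ hy₂.1 hu.1.le).2
  case hdB =>
    intro x hx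
    have hx' : x ∈ Ioo a b := ⟨hy₂.1.trans hx.1, hx.2⟩
    have h := (hR (θ₁+θ₂-θ₂') x hx').const_mul (θ₁ * F₀ y₂ ^ θ₂' / (θ₁+θ₂-θ₂'))
    refine h.congr_deriv ?_
    symm
    rw [div_mul_eq_mul_div, eq_div_iff hd]
    ring
  case hpB =>
    intro x hx
    have hx' : x ∈ Ioo a b := ⟨hy₂.1.trans hx.1, hx.2⟩
    exact mul_nonneg (mul_nonneg (mul_nonneg hθ₁.le (hf₀pos x hx').le) (hnn x hx' _))
      (hnn y₂ hy₂ _)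
  case haB =>
    exact ((hR (θ₁+θ₂-θ₂') y₂ hy₂).const_mul
      (θ₁ * F₀ y₂ ^ θ₂' / (θ₁+θ₂-θ₂'))).continuousAt.tendsto.mono_left nhdsWithin_le_nhds
  case hbB =>
    simpa using (tendsto_const_nhds.mul (hRb (θ₁+θ₂-θ₂')) :
      Filter.Tendsto (fun y => θ₁ * F₀ y₂ ^ θ₂' / (θ₁+θ₂-θ₂') * F₀ y ^ (θ₁+θ₂-θ₂'))
        (nhdsWithin b (Iio b)) (nhds (θ₁ * F₀ y₂ ^ θ₂' / (θ₁+θ₂-θ₂') * 1)))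
  rw [← intervalIntegral.integral_add_adjacent_intervals pieceA.1 pieceB.1,
    pieceA.2, pieceB.2]
  have heq2 : F₀ y₂ ^ θ₂' * F₀ y₂ ^ (θ₁+θ₂-θ₂') = F₀ y₂ ^ (θ₁+θ₂) := by
    rw [hmulR y₂ hy₂]; congr 1; ring
  field_simp
  linear_combination -θ₁ * heq2
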